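/- Let p be an odd prime, and for nonzero u ∈ ℤ/pℤ define A_u = {(x, x²/u) : x ∈ ℤ/pℤ} ⊂ (ℤ/pℤ)². For nonzero u ≠ v in ℤ/pℤ and (a,b) ∈ (ℤ/pℤ)², the number of pairs (α, β) ∈ A_u × A_v with α - β = (a,b) equals 1 + χ(Δ), where χ is the Legendre symbol mod p and Δ = 4uv(a² - b(u-v)). -/

import Mathlib

/-- The parabola-type set `A_u = {(x, x²/u) : x ∈ ZMod p}`. -/
def parabolaSet (p : ℕ) [NeZero p] (u : ZMod p) : Finset (ZMod p × ZMod p) :=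
  (Finset.univ : Finset (ZMod p)).image (fun x => (x, x ^ 2 * u⁻¹))

/-- Let `p` be an odd prime, and for nonzero `u : ZMod p` let
`A_u = {(x, x²/u) : x ∈ ZMod p} ⊆ (ZMod p)²`.  For nonzero `u ≠ v` and any
`(a, b)`, the number of pairs `(α, β) ∈ A_u × A_v` with `α - β = (a, b)` equals
`1 + χ(Δ)` where `χ` is the quadratic character of `ZMod p` and
`Δ = 4uv(a² - b(u - v))`. -/
theorem stmt5 (p : ℕ) [Fact p.Prime] (hp : p ≠ 2) (u v a b : ZMod p)
    (hu : u ≠ 0) (hv : v ≠ 0) (huv : u ≠ v) :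
    (((parabolaSet p u ×ˢ parabolaSet p v).filter
        (fun q : (ZMod p × ZMod p) × (ZMod p × ZMod p) => q.1 - q.2 = (a, b))).card : ℤ)
      = 1 + quadraticChar (ZMod p) (4 * u * v * (a ^ 2 - b * (u - v))) := by
  have hchar : ringChar (ZMod p) ≠ 2 := by rw [ZMod.ringChar_zmod_n]; exact hp
  have h2 : (2 : ZMod p) ≠ 0 := Ring.two_ne_zero hchar
  set Δ : ZMod p := 4 * u * v * (a ^ 2 - b * (u - v)) with hΔ
  have hc : v - u ≠ 0 := sub_ne_zero.mpr (Ne.symm huv)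
  have h2c : 2 * (v - u) ≠ 0 := mul_ne_zero h2 hc
  have hxq : ∀ z : ZMod p, (2 * (v - u) * z + 2 * u * a - 2 * u * a) * (2 * (v - u))⁻¹ = z := by
    intro z; field_simp; ring
  have hcard : ((parabolaSet p u ×ˢ parabolaSet p v).filter
        (fun q : (ZMod p × ZMod p) × (ZMod p × ZMod p) => q.1 - q.2 = (a, b))).card
      = (Finset.univ.filter (fun y : ZMod p => y ^ 2 = Δ)).card := by
    apply Finset.card_nbij'
      (fun q => 2 * (v - u) * q.1.1 + 2 * u * a)
      (fun y => (((y - 2 * u * a) * (2 * (v - u))⁻¹,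
                  ((y - 2 * u * a) * (2 * (v - u))⁻¹) ^ 2 * u⁻¹),
                 ((y - 2 * u * a) * (2 * (v - u))⁻¹ - a,
                  ((y - 2 * u * a) * (2 * (v - u))⁻¹ - a) ^ 2 * v⁻¹)))
    · rintro ⟨⟨x1, x2⟩, y1, y2⟩ hq
      simp only [Finset.mem_filter, Finset.mem_product, parabolaSet, Finset.mem_image,
        Finset.mem_univ, true_and, Prod.mk.injEq, Prod.mk_sub_mk, Finset.mem_coe] at hq ⊢
      obtain ⟨⟨⟨x, hx1, hx2⟩, ⟨y, hy1, hy2⟩⟩, hab1, hab2⟩ := hq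
      subst hx1 hy1
      have hy' : y = x - a := by linear_combination -hab1
      have hb : x ^ 2 * u⁻¹ - (x - a) ^ 2 * v⁻¹ = b := by
        rw [← hy', hx2, hy2]; exact hab2
      have hb2 : v * x ^ 2 - u * (x - a) ^ 2 = b * u * v := by
        field_simp at hb; linear_combination hb
      linear_combination (4 * (v - u)) * hb2
    · intro y hy
      simp only [Finset.mem_coe, Finset.mem_filter, Finset.mem_univ, true_and] at hy
      set x : ZMod p := (y - 2 * u * a) * (2 * (v - u))⁻¹ with hxdef
      have hx2c : 2 * (v - u) * x = y - 2 * u * a := by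
        rw [hxdef, mul_comm, inv_mul_cancel_right₀ h2c]
      have h4 : (4 : ZMod p) * (v - u) ≠ 0 := by
        have e : (4 : ZMod p) = 2 * 2 := by norm_num
        exact mul_ne_zero (e ▸ mul_ne_zero h2 h2) hc
      have key0 : v * x ^ 2 - u * (x - a) ^ 2 = b * u * v := by
        have h0 : 4 * (v - u) * (v * x ^ 2 - u * (x - a) ^ 2 - b * u * v) = 0 := by
          have : (2 * (v - u) * x + 2 * u * a) ^ 2 - Δ = 0 := by
            rw [hx2c]; linear_combination hy
          linear_combination this - (hΔ ▸ rfl : Δ = Δ)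
        have := (mul_eq_zero.mp h0).resolve_left h4
        linear_combination this
      have key : x ^ 2 * u⁻¹ - (x - a) ^ 2 * v⁻¹ = b := by
        field_simp
        linear_combination key0
      refine Finset.mem_filter.mpr ⟨Finset.mem_product.mpr ⟨?_, ?_⟩, ?_⟩
      · exact Finset.mem_image.mpr ⟨x, Finset.mem_univ _, rfl⟩
      · exact Finset.mem_image.mpr ⟨x - a, Finset.mem_univ _, rfl⟩
      · simp only [Prod.mk_sub_mk, Prod.mk.injEq]
        exact ⟨by ring, key⟩
    · rintro ⟨⟨x1, x2⟩, y1, y2⟩ hq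
      simp only [Finset.mem_filter, Finset.mem_product, parabolaSet, Finset.mem_image,
        Finset.mem_univ, true_and, Prod.mk.injEq, Prod.mk_sub_mk, Finset.mem_coe] at hq
      obtain ⟨⟨⟨x, hx1, hx2⟩, ⟨y, hy1, hy2⟩⟩, hab1, hab2⟩ := hq
      subst hx1 hy1
      have hy' : y = x - a := by linear_combination -hab1
      simp only [hxq, Prod.mk.injEq]
      exact ⟨⟨trivial, hx2⟩, hy'.symm, by rw [← hy2, hy']⟩
    · intro y hy
      simp only
      rw [mul_comm (2 * (v - u)), inv_mul_cancel_right₀ h2c]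
      ring
  rw [hcard]
  have hq := quadraticChar_card_sqrts hchar Δ
  rw [show {x : ZMod p | x ^ 2 = Δ}.toFinset = Finset.univ.filter (fun y : ZMod p => y ^ 2 = Δ)
    from by ext z; simp] at hq
  rw [hq]; ring
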